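/- Let γ : [a,b] → ℂ be continuously differentiable with |γ'(t)| ≤ L for all t, and suppose L·(b−a) < |γ(a)| + |γ(b)|. Let Γ : [0,1] → ℂ be the closed curve obtained by concatenating γ (suitably reparametrized) with the straight segment from γ(b) back to γ(a). Then Γ avoids the origin and its winding number about 0 is zero. -/

import Mathlib

open Set

theorem stmt_18 (a b L : ℝ) (γ γ' : ℝ → ℂ)
    (hab : a < b) (hL : 0 ≤ L)
    (hderiv : ∀ t ∈ Icc a b, HasDerivWithinAt γ (γ' t) (Icc a b) t)
    (hcont : ContinuousOn γ' (Icc a b))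
    (hbound : ∀ t ∈ Icc a b, ‖γ' t‖ ≤ L)
    (hcond : L * (b - a) < ‖γ a‖ + ‖γ b‖)
    (Γ : ℝ → ℂ)
    (hΓ₁ : ∀ t ∈ Icc (0:ℝ) (1/2), Γ t = γ (a + 2 * t * (b - a)))
    (hΓ₂ : ∀ t ∈ Icc (1/2:ℝ) 1, Γ t = γ b + ((2 * t - 1 : ℝ) : ℂ) * (γ a - γ b)) :
    (∀ t ∈ Icc (0:ℝ) 1, Γ t ≠ 0) ∧
    ∃ θ : ℝ → ℂ, ContinuousOn θ (Icc (0:ℝ) 1) ∧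
      (∀ t ∈ Icc (0:ℝ) 1, Complex.exp (θ t) = Γ t) ∧
      θ 0 = θ 1 := by
  -- Lipschitz estimate from the derivative bound
  have hγlip : ∀ x ∈ Icc a b, ∀ y ∈ Icc a b, ‖γ y - γ x‖ ≤ L * ‖y - x‖ := by
    intro x hx y hy
    exact (convex_Icc a b).norm_image_sub_le_of_norm_hasDerivWithin_le hderiv hbound hx hy
  -- the ellipse
  set E : Set ℂ := {z : ℂ | ‖z - γ a‖ + ‖z - γ b‖ ≤ L * (b - a)} with hE
  have hEconv : Convex ℝ E := by
    intro z hz w hw s t hs ht hst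
    simp only [hE, mem_setOf_eq] at hz hw ⊢
    have htt : t = 1 - s := by linarith
    subst htt
    have h1 : s • z + (1 - s) • w - γ a = s • (z - γ a) + (1 - s) • (w - γ a) := by module
    have h2 : s • z + (1 - s) • w - γ b = s • (z - γ b) + (1 - s) • (w - γ b) := by module
    have n1 : ‖s • z + (1 - s) • w - γ a‖ ≤ s * ‖z - γ a‖ + (1 - s) * ‖w - γ a‖ := by
      rw [h1]
      refine (norm_add_le _ _).trans ?_
      rw [norm_smul, norm_smul, Real.norm_eq_abs, Real.norm_eq_abs, abs_of_nonneg hs,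
        abs_of_nonneg ht]
    have n2 : ‖s • z + (1 - s) • w - γ b‖ ≤ s * ‖z - γ b‖ + (1 - s) * ‖w - γ b‖ := by
      rw [h2]
      refine (norm_add_le _ _).trans ?_
      rw [norm_smul, norm_smul, Real.norm_eq_abs, Real.norm_eq_abs, abs_of_nonneg hs,
        abs_of_nonneg ht]
    have hsum : s * (L * (b - a)) + (1 - s) * (L * (b - a)) = L * (b - a) := by ring
    nlinarith [mul_le_mul_of_nonneg_left hz hs, mul_le_mul_of_nonneg_left hw ht]
  have hEclosed : IsClosed E := by
    apply isClosed_le _ continuous_const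
    exact ((continuous_id.sub continuous_const).norm.add
      (continuous_id.sub continuous_const).norm)
  have h0E : (0 : ℂ) ∉ E := by
    simp only [hE, mem_setOf_eq, zero_sub, norm_neg]
    linarith
  have hchord : ‖γ a - γ b‖ ≤ L * (b - a) := by
    have := hγlip b ⟨hab.le, le_rfl⟩ a ⟨le_rfl, hab.le⟩
    rwa [Real.norm_eq_abs, abs_of_nonpos (by linarith), neg_sub] at this
  have hEa : γ a ∈ E := by
    simp only [hE, mem_setOf_eq, sub_self, norm_zero, zero_add]
    exact hchord
  -- all points of Γ on [0,1] lie in E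
  have hmem : ∀ t ∈ Icc (0:ℝ) 1, Γ t ∈ E := by
    intro t ht
    by_cases htt : t ≤ 1/2
    · have hs : a + 2 * t * (b - a) ∈ Icc a b := by
        constructor <;> nlinarith [ht.1]
      rw [hΓ₁ t ⟨ht.1, htt⟩]
      have h1 := hγlip a ⟨le_rfl, hab.le⟩ _ hs
      have h2 := hγlip b ⟨hab.le, le_rfl⟩ _ hs
      have e1 : ‖a + 2 * t * (b - a) - a‖ = 2 * t * (b - a) := by
        rw [Real.norm_eq_abs]
        rw [abs_of_nonneg] <;> nlinarith [ht.1]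
      have e2 : ‖a + 2 * t * (b - a) - b‖ = (1 - 2 * t) * (b - a) := by
        rw [Real.norm_eq_abs, abs_of_nonpos] <;> nlinarith [ht.1]
      rw [e1] at h1; rw [e2] at h2
      simp only [hE, mem_setOf_eq]
      nlinarith
    · have hts : (1:ℝ)/2 ≤ t := le_of_not_ge htt
      rw [hΓ₂ t ⟨hts, ht.2⟩]
      have hs0 : (0:ℝ) ≤ 2 * t - 1 := by linarith
      have hs1 : 2 * t - 1 ≤ 1 := by linarith [ht.2]
      have e1 : γ b + ((2 * t - 1 : ℝ) : ℂ) * (γ a - γ b) - γ a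
          = ((1 - (2 * t - 1) : ℝ) : ℂ) * (γ b - γ a) := by push_cast; ring
      have e2 : γ b + ((2 * t - 1 : ℝ) : ℂ) * (γ a - γ b) - γ b
          = ((2 * t - 1 : ℝ) : ℂ) * (γ a - γ b) := by push_cast; ring
      simp only [hE, mem_setOf_eq, e1, e2, norm_mul, Complex.norm_real, Real.norm_eq_abs,
        abs_of_nonneg hs0, abs_of_nonneg (by linarith : (0:ℝ) ≤ 1 - (2 * t - 1))]
      have : ‖γ b - γ a‖ = ‖γ a - γ b‖ := by rw [← neg_sub, norm_neg]
      rw [this]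
      nlinarith [norm_nonneg (γ a - γ b)]
  -- Γ avoids 0
  have hne : ∀ t ∈ Icc (0:ℝ) 1, Γ t ≠ 0 := by
    intro t ht h
    exact h0E (h ▸ hmem t ht)
  refine ⟨hne, ?_⟩
  -- separate 0 from E
  obtain ⟨f, u, hfE, hfu⟩ := geometric_hahn_banach_closed_point hEconv hEclosed h0E
  have hu0 : u < 0 := by simpa using hfu
  set d : ℂ := (f 1 : ℝ) - (f Complex.I : ℝ) * Complex.I with hd
  have hfd : ∀ z : ℂ, (z * d).re = f z := by
    intro z
    have hz : z = z.re • (1:ℂ) + z.im • Complex.I := by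
      simp [Complex.real_smul, Complex.re_add_im]
    have h2 : f z = z.re * f 1 + z.im * f Complex.I := by
      conv_lhs => rw [hz]
      rw [map_add, map_smul, map_smul, smul_eq_mul, smul_eq_mul]
    rw [h2]
    simp [hd, Complex.mul_re]
  set u₀ : ℂ := -(starRingEnd ℂ) d with hu₀def
  have hfneg : ∀ z ∈ E, f z < 0 := fun z hz => (hfE z hz).trans hu0
  have hd0 : d ≠ 0 := by
    intro h
    have h1 := hfd (γ a)
    rw [h, mul_zero] at h1
    have h2 := hfneg (γ a) hEa
    simp at h1
    linarith
  have hu₀ : u₀ ≠ 0 := by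
    simp only [hu₀def, neg_ne_zero]
    simpa using hd0
  have key : ∀ z ∈ E, 0 < (z / u₀).re := by
    intro z hz
    rw [Complex.div_re, ← add_div]
    apply div_pos
    · have h1 := hfd z
      have h2 := hfneg z hz
      simp only [Complex.mul_re] at h1
      simp only [hu₀def, Complex.neg_re, Complex.neg_im, Complex.conj_re, Complex.conj_im]
      nlinarith
    · exact Complex.normSq_pos.mpr hu₀
  -- continuity of Γ
  have hγc : ContinuousOn γ (Icc a b) := fun x hx => (hderiv x hx).continuousWithinAt
  have hc1 : ContinuousOn Γ (Icc (0:ℝ) (1/2)) := by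
    apply ContinuousOn.congr (f := fun t => γ (a + 2 * t * (b - a)))
    · apply hγc.comp (by fun_prop)
      intro t ht
      have : a + 2 * t * (b - a) ∈ Icc a b :=
        ⟨by nlinarith [ht.1, ht.2], by nlinarith [ht.1, ht.2]⟩
      exact this
    · intro t ht; exact hΓ₁ t ht
  have hc2 : ContinuousOn Γ (Icc (1/2:ℝ) 1) := by
    apply ContinuousOn.congr (f := fun t => γ b + ((2 * t - 1 : ℝ) : ℂ) * (γ a - γ b))
    · fun_prop
    · intro t ht; exact hΓ₂ t ht
  have hΓc : ContinuousOn Γ (Icc (0:ℝ) 1) := by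
    rw [show Icc (0:ℝ) 1 = Icc (0:ℝ) (1/2) ∪ Icc (1/2:ℝ) 1 from
      (Icc_union_Icc_eq_Icc (by norm_num) (by norm_num)).symm]
    intro x hx
    apply ContinuousWithinAt.union
    · by_cases h : x ∈ Icc (0:ℝ) (1/2)
      · exact hc1 x h
      · exact continuousWithinAt_of_notMem_closure (by rwa [closure_Icc])
    · by_cases h : x ∈ Icc (1/2:ℝ) 1
      · exact hc2 x h
      · exact continuousWithinAt_of_notMem_closure (by rwa [closure_Icc])
  -- define the logarithm
  refine ⟨fun t => Complex.log (Γ t / u₀) + Complex.log u₀, ?_, ?_, ?_⟩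
  · apply ContinuousOn.add _ continuousOn_const
    apply ContinuousOn.clog (hΓc.div_const u₀)
    intro t ht
    exact Or.inl (key _ (hmem t ht))
  · intro t ht
    have h1 : Γ t / u₀ ≠ 0 := by
      intro h
      have := key _ (hmem t ht)
      rw [h] at this
      simp at this
    rw [Complex.exp_add, Complex.exp_log h1, Complex.exp_log hu₀, div_mul_cancel₀ _ hu₀]
  · have hΓ0 : Γ 0 = γ a := by
      rw [hΓ₁ 0 ⟨le_rfl, by norm_num⟩]; norm_num
    have hΓ1 : Γ 1 = γ a := by
      rw [hΓ₂ 1 ⟨by norm_num, le_rfl⟩]; push_cast; ring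
    simp only [hΓ0, hΓ1]
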